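/- arXiv:2309.13416 — 2 statements merged into one kernel-verified Lean document; each statement's English description precedes it below -/
import Mathlib

section
/- For the PPDG iterates, for every k ≥ 1 one has 𝓛(x^{k+1}, y^{k+1}, x^{k+2}, x^k) + c(‖x^{k+1} - x^k‖² + ‖x^k - x^{k-1}‖²) ≤ 𝓛(x^k, y^k, x^{k+1}, x^{k-1}); in particular the sequence k ↦ 𝓛(z^k) is nonincreasing. -/
open RealInnerProductSpace

noncomputable section

/-- The Lyapunov function `𝓛(x,y,u,v) = L(x,y) - a‖x-u‖² + b‖x-v‖²` where
`L(x,y) = f(x) + ⟪y, Ax⟫ - h*(y)` is the Lagrangian. -/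
def Lyap {X : Type*} [NormedAddCommGroup X] [InnerProductSpace ℝ X]
    {Y : Type*} [NormedAddCommGroup Y] [InnerProductSpace ℝ Y]
    (A : X →L[ℝ] Y) (f : X → ℝ) (hs : Y → ℝ) (a b : ℝ)
    (p : X) (q : Y) (u v : X) : ℝ :=
  (f p + ⟪q, A p⟫ - hs q) - a * ‖p - u‖^2 + b * ‖p - v‖^2

/-- The exact "sum of squares" scalar inequality used with the tuned constants. -/
private lemma scalar_ineq (α δ Lf D Dm Dp : ℝ) (hα : 0 < α) (hδ : 0 < δ) :
    Lf*Dp*Dm + Lf*D*Dm + α*Lf^2*(D*Dm)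
      ≤ δ*(1+α*Lf)^2/α * D^2 + α*Lf^2/(2*δ) * Dm^2 + δ/α * Dp^2 := by
  rw [← sub_nonneg]
  have h : δ*(1+α*Lf)^2/α * D^2 + α*Lf^2/(2*δ) * Dm^2 + δ/α * Dp^2
      - (Lf*Dp*Dm + Lf*D*Dm + α*Lf^2*(D*Dm))
      = ((2*δ*(1+α*Lf)*D - α*Lf*Dm)^2 + (2*δ*Dp - α*Lf*Dm)^2) / (4*δ*α) := by
    field_simp
    ring
  rw [h]
  positivity

/-- Descent lemma for a function with `Lf`-Lipschitz gradient. -/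
private lemma descent_aux {X : Type*} [NormedAddCommGroup X] [InnerProductSpace ℝ X]
    [CompleteSpace X]
    (f : X → ℝ) (f' : X → X) (hf : ∀ p, HasGradientAt f (f' p) p)
    (Lf : ℝ) (hLip : ∀ p q, ‖f' p - f' q‖ ≤ Lf * ‖p - q‖)
    (p q : X) : f q ≤ f p + ⟪f' p, q - p⟫ + Lf/2 * ‖q - p‖^2 := by
  set u := q - p with hu
  have hline : ∀ t : ℝ, HasDerivAt (fun s : ℝ => p + s • u) u t := by
    intro t
    simpa using ((hasDerivAt_id t).smul_const u).const_add p
  have hg : ∀ t : ℝ, HasDerivAt (fun s : ℝ => f (p + s • u)) ⟪f' (p + t • u), u⟫ t := by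
    intro t
    have h1 := (hf (p + t • u)).hasFDerivAt.comp_hasDerivAt t (hline t)
    simpa [InnerProductSpace.toDual_apply_apply, Function.comp_def] using h1
  set F : ℝ → ℝ := fun t => f p + t * ⟪f' p, u⟫ + Lf/2 * ‖u‖^2 * t^2 - f (p + t • u) with hF
  have hF' : ∀ t : ℝ, HasDerivAt F
      (⟪f' p, u⟫ + Lf/2 * ‖u‖^2 * (2*t) - ⟪f' (p + t • u), u⟫) t := by
    intro t
    have ha : HasDerivAt (fun s : ℝ => f p + s * ⟪f' p, u⟫) (⟪f' p, u⟫) t := by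
      simpa using ((hasDerivAt_id t).mul_const ⟪f' p, u⟫).const_add (f p)
    have hb : HasDerivAt (fun s : ℝ => Lf/2 * ‖u‖^2 * s^2) (Lf/2 * ‖u‖^2 * (2*t)) t := by
      have := HasDerivAt.const_mul (Lf/2 * ‖u‖^2) (hasDerivAt_pow 2 t)
      simpa [mul_comm, mul_assoc] using this
    exact (ha.add hb).sub (hg t)
  have hdiff : Differentiable ℝ F := fun t => (hF' t).differentiableAt
  have hmono : MonotoneOn F (Set.Icc (0:ℝ) 1) := by
    apply monotoneOn_of_deriv_nonneg (convex_Icc 0 1) hdiff.continuous.continuousOn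
      hdiff.differentiableOn
    intro t ht
    rw [interior_Icc] at ht
    rw [(hF' t).deriv]
    have h2 : ⟪f' (p + t • u), u⟫ - ⟪f' p, u⟫ ≤ Lf * t * ‖u‖^2 := by
      have c1 : ⟪f' (p + t • u) - f' p, u⟫ ≤ ‖f' (p + t • u) - f' p‖ * ‖u‖ :=
        real_inner_le_norm _ _
      have c2 : ‖f' (p + t • u) - f' p‖ * ‖u‖ ≤ (Lf * ‖(p + t • u) - p‖) * ‖u‖ :=
        mul_le_mul_of_nonneg_right (hLip _ _) (norm_nonneg u)
      have c3 : ‖(p + t • u) - p‖ = t * ‖u‖ := by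
        rw [add_sub_cancel_left, norm_smul, Real.norm_eq_abs, abs_of_pos ht.1]
      rw [inner_sub_left] at c1
      rw [c3] at c2
      nlinarith [c1, c2]
    linarith
  have h01 := hmono (Set.mem_Icc.mpr ⟨le_refl 0, zero_le_one⟩)
    (Set.mem_Icc.mpr ⟨zero_le_one, le_refl 1⟩) zero_le_one
  have hpq : p + u = q := by rw [hu]; abel
  have hF0 : F 0 = 0 := by simp [hF]
  have hF1 : F 1 = f p + ⟪f' p, u⟫ + Lf/2 * ‖u‖^2 - f q := by
    simp [hF, hpq]
  rw [hF0, hF1] at h01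
  linarith

set_option maxHeartbeats 1000000 in
/-- The prox step minimizer inequality upgraded with the strong convexity of the
quadratic term. -/
private lemma strong_prox {X Y : Type*} [NormedAddCommGroup X] [InnerProductSpace ℝ X]
    [FiniteDimensional ℝ X] [NormedAddCommGroup Y] [InnerProductSpace ℝ Y]
    [FiniteDimensional ℝ Y]
    (A : X →L[ℝ] Y) (hs : Y → ℝ) (hconv : ConvexOn ℝ Set.univ hs)
    (α : ℝ) (hα : 0 < α) (v : X) (y0 y1 : Y)
    (hmin : ∀ w : Y, hs y1 - ⟪y1, A v⟫
        + (1/2) * ⟪α • A ((ContinuousLinearMap.adjoint A) (y1 - y0)), y1 - y0⟫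
      ≤ hs w - ⟪w, A v⟫
        + (1/2) * ⟪α • A ((ContinuousLinearMap.adjoint A) (w - y0)), w - y0⟫)
    (w : Y) :
    hs y1 - ⟪y1, A v⟫ + α/2 * ‖(ContinuousLinearMap.adjoint A) (y1 - y0)‖^2
      + α/2 * ‖(ContinuousLinearMap.adjoint A) (w - y1)‖^2
    ≤ hs w - ⟪w, A v⟫ + α/2 * ‖(ContinuousLinearMap.adjoint A) (w - y0)‖^2 := by
  have hq : ∀ d : Y, (1/2) * ⟪α • A ((ContinuousLinearMap.adjoint A) d), d⟫
      = α/2 * ‖(ContinuousLinearMap.adjoint A) d‖^2 := by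
    intro d
    rw [real_inner_smul_left, real_inner_comm, ← ContinuousLinearMap.adjoint_inner_left A,
      real_inner_self_eq_norm_sq]
    ring
  have hexp : ‖(ContinuousLinearMap.adjoint A) (w - y0)‖^2
      = ‖(ContinuousLinearMap.adjoint A) (w - y1)‖^2
        + 2*⟪(ContinuousLinearMap.adjoint A) (y1 - y0),
            (ContinuousLinearMap.adjoint A) (w - y1)⟫
        + ‖(ContinuousLinearMap.adjoint A) (y1 - y0)‖^2 := by
    rw [show w - y0 = (w - y1) + (y1 - y0) by abel, map_add, norm_add_sq_real,
      real_inner_comm]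
  have final : ∀ a b : ℝ, (∀ ε : ℝ, 0 < ε → a ≤ b + ε) → a ≤ b := by
    intro a b h
    by_contra hc
    push_neg at hc
    have := h ((a-b)/2) (by linarith)
    linarith
  apply final
  intro ε hε
  set K := α/2 * ‖(ContinuousLinearMap.adjoint A) (w - y1)‖^2 with hK
  have hKnn : 0 ≤ K := by positivity
  have hK1 : (0:ℝ) < K + 1 := by linarith
  set t := min (1/2 : ℝ) (ε / (K+1)) with ht'
  have ht0 : 0 < t := lt_min (by norm_num) (div_pos hε hK1)
  have ht1 : t ≤ 1/2 := min_le_left _ _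
  have htK : t * K ≤ ε := by
    have h1 : t ≤ ε / (K+1) := min_le_right _ _
    have h2 : t * (K+1) ≤ (ε/(K+1)) * (K+1) := mul_le_mul_of_nonneg_right h1 hK1.le
    rw [div_mul_cancel₀ _ (ne_of_gt hK1)] at h2
    nlinarith
  have hcv : hs (y1 + t • (w - y1)) ≤ (1-t) * hs y1 + t * hs w := by
    have h := hconv.2 (Set.mem_univ y1) (Set.mem_univ w)
      (by linarith : (0:ℝ) ≤ 1 - t) ht0.le (by ring)
    rwa [show (1-t) • y1 + t • w = y1 + t • (w - y1) by module] at h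
  have ha1 : (ContinuousLinearMap.adjoint A) ((y1 + t • (w - y1)) - y0)
      = (ContinuousLinearMap.adjoint A) (y1 - y0)
        + t • (ContinuousLinearMap.adjoint A) (w - y1) := by
    rw [show (y1 + t • (w - y1)) - y0 = (y1 - y0) + t • (w - y1) by abel, map_add,
      map_smul]
  have hq1 : ‖(ContinuousLinearMap.adjoint A) (y1 - y0)
        + t • (ContinuousLinearMap.adjoint A) (w - y1)‖^2
      = ‖(ContinuousLinearMap.adjoint A) (y1 - y0)‖^2
        + 2*(t*⟪(ContinuousLinearMap.adjoint A) (y1 - y0),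
            (ContinuousLinearMap.adjoint A) (w - y1)⟫)
        + t^2*‖(ContinuousLinearMap.adjoint A) (w - y1)‖^2 := by
    rw [norm_add_sq_real, real_inner_smul_right, norm_smul, Real.norm_eq_abs, mul_pow,
      sq_abs]
  have hlin : ⟪y1 + t • (w - y1), A v⟫ = ⟪y1, A v⟫ + t*⟪w, A v⟫ - t*⟪y1, A v⟫ := by
    rw [inner_add_left, real_inner_smul_left, inner_sub_left]
    ring
  have M := hmin (y1 + t • (w - y1))
  rw [hq, hq, ha1, hq1, hlin] at M
  have hZ : 0 ≤ t * ((hs w - ⟪w, A v⟫) - (hs y1 - ⟪y1, A v⟫)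
      + α*⟪(ContinuousLinearMap.adjoint A) (y1 - y0),
          (ContinuousLinearMap.adjoint A) (w - y1)⟫ + t*K) := by
    rw [hK]
    nlinarith [M, hcv]
  have hdiv : 0 ≤ (hs w - ⟪w, A v⟫) - (hs y1 - ⟪y1, A v⟫)
      + α*⟪(ContinuousLinearMap.adjoint A) (y1 - y0),
          (ContinuousLinearMap.adjoint A) (w - y1)⟫ + t*K :=
    le_of_mul_le_mul_left (by linarith [hZ]) ht0
  rw [hexp]
  clear_value t K
  linarith [hdiv, htK, hK]

set_option maxHeartbeats 1000000 in
/-- sufficient decrease of the Lyapunov function along PPDG iterates;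
in particular `k ↦ 𝓛(z^k)` is nonincreasing. -/
theorem stmt2
    {X : Type*} [NormedAddCommGroup X] [InnerProductSpace ℝ X] [FiniteDimensional ℝ X]
    {Y : Type*} [NormedAddCommGroup Y] [InnerProductSpace ℝ Y] [FiniteDimensional ℝ Y]
    (A : X →L[ℝ] Y) (hA : Function.Surjective A)
    (f : X → ℝ) (f' : X → X) (hf : ∀ p, HasGradientAt f (f' p) p)
    (Lf : ℝ) (hLf : 0 < Lf) (hLip : ∀ p q, ‖f' p - f' q‖ ≤ Lf * ‖p - q‖)
    (hs : Y → ℝ) (hconv : ConvexOn ℝ Set.univ hs)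
    (hbdd : ∀ w : Y, BddBelow (Set.range fun p : X => f p + ⟪w, A p⟫ - hs w))
    (α : ℝ) (hα : 0 < α)
    (x : ℕ → X) (y : ℕ → Y)
    (hxiter : ∀ k : ℕ,
      x (k+1) = x k - α • (f' (x k) + (ContinuousLinearMap.adjoint A) (y k)))
    (hyiter : ∀ k : ℕ, ∀ w : Y,
      hs (y (k+1)) - ⟪y (k+1), A ((2:ℝ) • x (k+1) - x k)⟫
        + (1/2) * ⟪α • A ((ContinuousLinearMap.adjoint A) (y (k+1) - y k)), y (k+1) - y k⟫
      ≤ hs w - ⟪w, A ((2:ℝ) • x (k+1) - x k)⟫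
        + (1/2) * ⟪α • A ((ContinuousLinearMap.adjoint A) (w - y k)), w - y k⟫)
    (δ a b c : ℝ) (hδ : 0 < δ)
    (hadef : a = δ / α)
    (hbdef : b = 1/(2*α) - Lf/4 - δ/α - α*δ*Lf^2/2 - δ*Lf + α*Lf^2/(4*δ))
    (hcdef : c = b - α*Lf^2/(2*δ))
    (hapos : 0 < a) (hbpos : 0 < b) (hcpos : 0 < c) :
    (∀ k : ℕ, 1 ≤ k →
      Lyap A f hs a b (x (k+1)) (y (k+1)) (x (k+2)) (x k)
          + c * (‖x (k+1) - x k‖^2 + ‖x k - x (k-1)‖^2)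
        ≤ Lyap A f hs a b (x k) (y k) (x (k+1)) (x (k-1)))
    ∧ (∀ k : ℕ, 1 ≤ k →
      Lyap A f hs a b (x (k+1)) (y (k+1)) (x (k+2)) (x k)
        ≤ Lyap A f hs a b (x k) (y k) (x (k+1)) (x (k-1))) := by
  have main : ∀ k : ℕ, 1 ≤ k →
      Lyap A f hs a b (x (k+1)) (y (k+1)) (x (k+2)) (x k)
          + c * (‖x (k+1) - x k‖^2 + ‖x k - x (k-1)‖^2)
        ≤ Lyap A f hs a b (x k) (y k) (x (k+1)) (x (k-1)) := by
    intro k hk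
    obtain ⟨n, rfl⟩ : ∃ n, k = n + 1 := ⟨k - 1, (Nat.succ_pred_eq_of_pos hk).symm⟩
    simp only [Nat.add_sub_cancel]
    show Lyap A f hs a b (x (n+2)) (y (n+2)) (x (n+3)) (x (n+1))
          + c * (‖x (n+2) - x (n+1)‖^2 + ‖x (n+1) - x n‖^2)
        ≤ Lyap A f hs a b (x (n+1)) (y (n+1)) (x (n+2)) (x n)
    have hx1 : x (n+1) = x n - α • (f' (x n) + (ContinuousLinearMap.adjoint A) (y n)) :=
      hxiter n
    have hx2 : x (n+2) = x (n+1)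
        - α • (f' (x (n+1)) + (ContinuousLinearMap.adjoint A) (y (n+1))) := hxiter (n+1)
    have hx3 : x (n+3) = x (n+2)
        - α • (f' (x (n+2)) + (ContinuousLinearMap.adjoint A) (y (n+2))) := hxiter (n+2)
    -- iterate identities
    have hv0 : α • (ContinuousLinearMap.adjoint A) (y n)
        = x n - x (n+1) - α • f' (x n) := by rw [hx1]; module
    have hv1 : α • (ContinuousLinearMap.adjoint A) (y (n+1))
        = x (n+1) - x (n+2) - α • f' (x (n+1)) := by rw [hx2]; module
    have hv2 : α • (ContinuousLinearMap.adjoint A) (y (n+2))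
        = x (n+2) - x (n+3) - α • f' (x (n+2)) := by rw [hx3]; module
    have hP : α • (ContinuousLinearMap.adjoint A) (y (n+2) - y (n+1))
        = (x (n+2) - x (n+3)) - (x (n+1) - x (n+2))
          - α • (f' (x (n+2)) - f' (x (n+1))) := by
      rw [map_sub, smul_sub, hv2, hv1]; module
    have hQ : α • (ContinuousLinearMap.adjoint A) (y (n+1) - y n)
        = (x (n+1) - x (n+2)) - (x n - x (n+1))
          - α • (f' (x (n+1)) - f' (x n)) := by
      rw [map_sub, smul_sub, hv1, hv0]; module
    -- primal descent
    have hdesc := descent_aux f f' hf Lf hLip (x (n+1)) (x (n+2))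
    have hs1' : f' (x (n+1)) + (ContinuousLinearMap.adjoint A) (y (n+1))
        = α⁻¹ • (x (n+1) - x (n+2)) := by
      rw [hx2]; match_scalars <;> field_simp <;> ring
    have heq2 : ⟪y (n+1), A (x (n+2)) - A (x (n+1))⟫
        = ⟪y (n+1), A (x (n+2))⟫ - ⟪y (n+1), A (x (n+1))⟫ := inner_sub_right _ _ _
    have hip2 : ⟪f' (x (n+1)), x (n+2) - x (n+1)⟫ + ⟪y (n+1), A (x (n+2)) - A (x (n+1))⟫
        = -(α⁻¹ * ‖x (n+2) - x (n+1)‖^2) := by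
      rw [← map_sub, ← ContinuousLinearMap.adjoint_inner_left, ← inner_add_left, hs1',
        real_inner_smul_left, show x (n+1) - x (n+2) = -(x (n+2) - x (n+1)) by abel,
        inner_neg_left, real_inner_self_eq_norm_sq]
      ring
    have hF1 : f (x (n+2)) + ⟪y (n+1), A (x (n+2))⟫
        ≤ f (x (n+1)) + ⟪y (n+1), A (x (n+1))⟫ + Lf/2 * ‖x (n+2) - x (n+1)‖^2
          - α⁻¹ * ‖x (n+2) - x (n+1)‖^2 := by
      rw [heq2] at hip2
      linarith [hdesc, hip2]
    -- dual side
    have hsp := strong_prox A hs hconv α hα ((2:ℝ) • x (n+1) - x n) (y n) (y (n+1))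
      (hyiter n) (y (n+2))
    have hexp' : α/2 * ‖(ContinuousLinearMap.adjoint A) (y (n+2) - y n)‖^2
        = α/2 * ‖(ContinuousLinearMap.adjoint A) (y (n+2) - y (n+1))‖^2
          + α * ⟪(ContinuousLinearMap.adjoint A) (y (n+2) - y (n+1)),
              (ContinuousLinearMap.adjoint A) (y (n+1) - y n)⟫
          + α/2 * ‖(ContinuousLinearMap.adjoint A) (y (n+1) - y n)‖^2 := by
      rw [show y (n+2) - y n = (y (n+2) - y (n+1)) + (y (n+1) - y n) by abel, map_add,
        norm_add_sq_real]
      ring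
    have eqa : ⟪y (n+2), A ((2:ℝ) • x (n+1) - x n)⟫ - ⟪y (n+1), A ((2:ℝ) • x (n+1) - x n)⟫
        = ⟪(ContinuousLinearMap.adjoint A) (y (n+2) - y (n+1)), (2:ℝ) • x (n+1) - x n⟫ := by
      rw [← inner_sub_left, ← ContinuousLinearMap.adjoint_inner_left]
    have eqb : ⟪y (n+2) - y (n+1), A (x (n+2))⟫
        = ⟪(ContinuousLinearMap.adjoint A) (y (n+2) - y (n+1)), x (n+2)⟫ :=
      (ContinuousLinearMap.adjoint_inner_left A _ _).symm
    have heq : ⟪y (n+2) - y (n+1), A (x (n+2))⟫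
        = ⟪y (n+2), A (x (n+2))⟫ - ⟪y (n+1), A (x (n+2))⟫ := inner_sub_left _ _ _
    have hkey : ⟪(ContinuousLinearMap.adjoint A) (y (n+2) - y (n+1)), x (n+2)⟫
          - ⟪(ContinuousLinearMap.adjoint A) (y (n+2) - y (n+1)), (2:ℝ) • x (n+1) - x n⟫
          + α * ⟪(ContinuousLinearMap.adjoint A) (y (n+2) - y (n+1)),
              (ContinuousLinearMap.adjoint A) (y (n+1) - y n)⟫
        = -⟪α • (ContinuousLinearMap.adjoint A) (y (n+2) - y (n+1)),
            f' (x (n+1)) - f' (x n)⟫ := by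
      have harg : (x (n+2) - ((2:ℝ) • x (n+1) - x n))
          + α • (ContinuousLinearMap.adjoint A) (y (n+1) - y n)
          = -(α • (f' (x (n+1)) - f' (x n))) := by rw [hQ]; module
      have step1 : ⟪(ContinuousLinearMap.adjoint A) (y (n+2) - y (n+1)), x (n+2)⟫
          - ⟪(ContinuousLinearMap.adjoint A) (y (n+2) - y (n+1)), (2:ℝ) • x (n+1) - x n⟫
          + α * ⟪(ContinuousLinearMap.adjoint A) (y (n+2) - y (n+1)),
              (ContinuousLinearMap.adjoint A) (y (n+1) - y n)⟫
          = ⟪(ContinuousLinearMap.adjoint A) (y (n+2) - y (n+1)),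
              (x (n+2) - ((2:ℝ) • x (n+1) - x n))
              + α • (ContinuousLinearMap.adjoint A) (y (n+1) - y n)⟫ := by
        simp only [inner_add_right, inner_sub_right, real_inner_smul_right]
        try ring
      rw [step1, harg, inner_neg_right, real_inner_smul_right, real_inner_smul_left]
    -- Cauchy-Schwarz estimates
    have hcs : -⟪α • (ContinuousLinearMap.adjoint A) (y (n+2) - y (n+1)),
          f' (x (n+1)) - f' (x n)⟫
        ≤ ‖x (n+2) - x (n+3)‖*(Lf*‖x (n+1) - x n‖)
          + ‖x (n+2) - x (n+1)‖*(Lf*‖x (n+1) - x n‖)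
          + α*((Lf*‖x (n+2) - x (n+1)‖)*(Lf*‖x (n+1) - x n‖)) := by
      rw [hP]
      have e : -⟪(x (n+2) - x (n+3)) - (x (n+1) - x (n+2))
            - α • (f' (x (n+2)) - f' (x (n+1))), f' (x (n+1)) - f' (x n)⟫
          = ⟪x (n+3) - x (n+2), f' (x (n+1)) - f' (x n)⟫
            + ⟪x (n+1) - x (n+2), f' (x (n+1)) - f' (x n)⟫
            + α * ⟪f' (x (n+2)) - f' (x (n+1)), f' (x (n+1)) - f' (x n)⟫ := by
        rw [show (x (n+2) - x (n+3)) - (x (n+1) - x (n+2))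
              - α • (f' (x (n+2)) - f' (x (n+1)))
            = -((x (n+3) - x (n+2)) + (x (n+1) - x (n+2))
              + α • (f' (x (n+2)) - f' (x (n+1)))) by module,
          inner_neg_left, inner_add_left, inner_add_left, real_inner_smul_left]
        ring
      rw [e]
      have hgm : ‖f' (x (n+1)) - f' (x n)‖ ≤ Lf * ‖x (n+1) - x n‖ := hLip _ _
      have hg : ‖f' (x (n+2)) - f' (x (n+1))‖ ≤ Lf * ‖x (n+2) - x (n+1)‖ := hLip _ _
      have t1 : ⟪x (n+3) - x (n+2), f' (x (n+1)) - f' (x n)⟫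
          ≤ ‖x (n+2) - x (n+3)‖*(Lf*‖x (n+1) - x n‖) := by
        calc ⟪x (n+3) - x (n+2), f' (x (n+1)) - f' (x n)⟫
            ≤ ‖x (n+3) - x (n+2)‖ * ‖f' (x (n+1)) - f' (x n)‖ := real_inner_le_norm _ _
          _ ≤ ‖x (n+3) - x (n+2)‖ * (Lf*‖x (n+1) - x n‖) :=
              mul_le_mul_of_nonneg_left hgm (norm_nonneg _)
          _ = ‖x (n+2) - x (n+3)‖ * (Lf*‖x (n+1) - x n‖) := by rw [norm_sub_rev]
      have t2 : ⟪x (n+1) - x (n+2), f' (x (n+1)) - f' (x n)⟫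
          ≤ ‖x (n+2) - x (n+1)‖*(Lf*‖x (n+1) - x n‖) := by
        calc ⟪x (n+1) - x (n+2), f' (x (n+1)) - f' (x n)⟫
            ≤ ‖x (n+1) - x (n+2)‖ * ‖f' (x (n+1)) - f' (x n)‖ := real_inner_le_norm _ _
          _ ≤ ‖x (n+1) - x (n+2)‖ * (Lf*‖x (n+1) - x n‖) :=
              mul_le_mul_of_nonneg_left hgm (norm_nonneg _)
          _ = ‖x (n+2) - x (n+1)‖ * (Lf*‖x (n+1) - x n‖) := by rw [norm_sub_rev]
      have t3 : α * ⟪f' (x (n+2)) - f' (x (n+1)), f' (x (n+1)) - f' (x n)⟫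
          ≤ α*((Lf*‖x (n+2) - x (n+1)‖)*(Lf*‖x (n+1) - x n‖)) := by
        apply mul_le_mul_of_nonneg_left _ hα.le
        calc ⟪f' (x (n+2)) - f' (x (n+1)), f' (x (n+1)) - f' (x n)⟫
            ≤ ‖f' (x (n+2)) - f' (x (n+1))‖ * ‖f' (x (n+1)) - f' (x n)‖ :=
              real_inner_le_norm _ _
          _ ≤ (Lf*‖x (n+2) - x (n+1)‖)*(Lf*‖x (n+1) - x n‖) :=
              mul_le_mul hg hgm (norm_nonneg _)
                (mul_nonneg hLf.le (norm_nonneg _))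
      linarith [t1, t2, t3]
    have hF2 : hs (y (n+1)) - hs (y (n+2)) + ⟪y (n+2), A (x (n+2))⟫
          - ⟪y (n+1), A (x (n+2))⟫
        ≤ ‖x (n+2) - x (n+3)‖*(Lf*‖x (n+1) - x n‖)
          + ‖x (n+2) - x (n+1)‖*(Lf*‖x (n+1) - x n‖)
          + α*((Lf*‖x (n+2) - x (n+1)‖)*(Lf*‖x (n+1) - x n‖)) :=
      by linarith [hsp, hexp', eqa, eqb, heq, hkey, hcs]
    -- scalar inequality with exact constants
    have hsc := scalar_ineq α δ Lf ‖x (n+2) - x (n+1)‖ ‖x (n+1) - x n‖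
      ‖x (n+2) - x (n+3)‖ hα hδ
    have hA0D : (1/α - Lf/2 - a - b - c) * ‖x (n+2) - x (n+1)‖^2
        = δ*(1+α*Lf)^2/α * ‖x (n+2) - x (n+1)‖^2 := by
      have h : 1/α - Lf/2 - a - b - c = δ*(1+α*Lf)^2/α := by
        subst hcdef hbdef hadef; field_simp; ring
      rw [h]
    have hB0D : (b - c) * ‖x (n+1) - x n‖^2 = α*Lf^2/(2*δ) * ‖x (n+1) - x n‖^2 := by
      have h : b - c = α*Lf^2/(2*δ) := by rw [hcdef]; ring
      rw [h]
    have haD : a * ‖x (n+2) - x (n+3)‖^2 = δ/α * ‖x (n+2) - x (n+3)‖^2 := by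
      rw [hadef]
    simp only [Lyap]
    rw [show ‖x (n+1) - x (n+2)‖ = ‖x (n+2) - x (n+1)‖ from norm_sub_rev _ _]
    have hainv : α⁻¹ = 1/α := (one_div α).symm
    rw [hainv] at hF1
    linarith [hF1, hF2, hsc, hA0D, hB0D, haD]
  refine ⟨main, fun k hk => ?_⟩
  have h1 := main k hk
  have h0 : 0 ≤ c * (‖x (k+1) - x k‖^2 + ‖x k - x (k-1)‖^2) :=
    mul_nonneg hcpos.le (by positivity)
  linarith
end
end

section
/- If the PPDG sequence {(x^k, y^k)} is bounded, then ∑_{k=1}^∞ ‖x^{k+1} - x^k‖² < ∞ and ∑_{k=1}^∞ ‖y^{k+1} - y^k‖² < ∞; in particular ‖x^{k+1} - x^k‖ → 0 and ‖y^{k+1} - y^k‖ → 0. -/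
open RealInnerProductSpace Filter

noncomputable section

lemma descent_lemma' {X : Type*} [NormedAddCommGroup X] [InnerProductSpace ℝ X] [CompleteSpace X]
    (f : X → ℝ) (f' : X → X) (hf : ∀ p, HasGradientAt f (f' p) p) (L : ℝ)
    (hLip : ∀ p q, ‖f' p - f' q‖ ≤ L * ‖p - q‖) (p q : X) :
    f q ≤ f p + ⟪f' p, q - p⟫ + L / 2 * ‖q - p‖ ^ 2 := by
  set d := q - p with hd
  have hpath : ∀ t : ℝ, HasDerivAt (fun s : ℝ => p + s • d) d t := by
    intro t
    simpa using ((hasDerivAt_id t).smul_const d).const_add p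
  have hg : ∀ t : ℝ, HasDerivAt (fun s : ℝ => f (p + s • d)) ⟪f' (p + t • d), d⟫ t := by
    intro t
    have h1 := ((hf (p + t • d)).hasFDerivAt).comp_hasDerivAt t (hpath t)
    simp at h1
    exact h1
  have hf'c : Continuous f' := by
    have : LipschitzWith (Real.toNNReal L) f' := by
      apply LipschitzWith.of_dist_le_mul
      intro a b
      rw [dist_eq_norm, dist_eq_norm]
      calc ‖f' a - f' b‖ ≤ L * ‖a - b‖ := hLip a b
        _ ≤ Real.toNNReal L * ‖a - b‖ := by
            gcongr
            exact Real.le_coe_toNNReal L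
    exact this.continuous
  have hgc : Continuous fun t : ℝ => ⟪f' (p + t • d), d⟫ := by
    apply Continuous.inner _ continuous_const
    exact hf'c.comp (by continuity)
  have hFTC : ∫ t in (0:ℝ)..1, ⟪f' (p + t • d), d⟫ = f q - f p := by
    have := intervalIntegral.integral_eq_sub_of_hasDerivAt (f := fun s : ℝ => f (p + s • d))
      (fun t _ => hg t) (hgc.intervalIntegrable 0 1)
    simpa [hd] using this
  have hmono : ∫ t in (0:ℝ)..1, ⟪f' (p + t • d), d⟫
      ≤ ∫ t in (0:ℝ)..1, (⟪f' p, d⟫ + L * ‖d‖ ^ 2 * t) := by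
    apply intervalIntegral.integral_mono_on (by norm_num) (hgc.intervalIntegrable 0 1)
      ((by continuity : Continuous fun t : ℝ => ⟪f' p, d⟫ + L * ‖d‖ ^ 2 * t).intervalIntegrable 0 1)
    intro t ht
    have h1 : ⟪f' (p + t • d) - f' p, d⟫ ≤ ‖f' (p + t • d) - f' p‖ * ‖d‖ :=
      real_inner_le_norm _ _
    have h2 : ‖f' (p + t • d) - f' p‖ ≤ L * (t * ‖d‖) := by
      have := hLip (p + t • d) p
      simpa [norm_smul, abs_of_nonneg ht.1] using this
    have h3 : ⟪f' (p + t • d), d⟫ = ⟪f' p, d⟫ + ⟪f' (p + t • d) - f' p, d⟫ := by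
      rw [inner_sub_left]; ring
    nlinarith [norm_nonneg d, mul_le_mul_of_nonneg_right h2 (norm_nonneg d)]
  have hval : ∫ t in (0:ℝ)..1, (⟪f' p, d⟫ + L * ‖d‖ ^ 2 * t) = ⟪f' p, d⟫ + L * ‖d‖ ^ 2 / 2 := by
    rw [intervalIntegral.integral_add (intervalIntegrable_const)
      ((by continuity : Continuous fun t : ℝ => L * ‖d‖ ^ 2 * t).intervalIntegrable 0 1)]
    rw [intervalIntegral.integral_const_mul, integral_id, intervalIntegral.integral_const]
    simp
    ring
  rw [hFTC] at hmono
  rw [hval] at hmono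
  linarith

set_option maxHeartbeats 2000000 in
/-- if the PPDG sequence is bounded, the squared successive differences are
summable; in particular the successive differences tend to zero. -/
theorem stmt4
    {X : Type*} [NormedAddCommGroup X] [InnerProductSpace ℝ X] [FiniteDimensional ℝ X]
    {Y : Type*} [NormedAddCommGroup Y] [InnerProductSpace ℝ Y] [FiniteDimensional ℝ Y]
    (A : X →L[ℝ] Y) (hA : Function.Surjective A)
    (f : X → ℝ) (f' : X → X) (hf : ∀ p, HasGradientAt f (f' p) p)
    (Lf : ℝ) (hLf : 0 < Lf) (hLip : ∀ p q, ‖f' p - f' q‖ ≤ Lf * ‖p - q‖)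
    (hs : Y → ℝ) (hconv : ConvexOn ℝ Set.univ hs)
    (hbdd : ∀ w : Y, BddBelow (Set.range fun p : X => f p + ⟪w, A p⟫ - hs w))
    (α : ℝ) (hα : 0 < α)
    (x : ℕ → X) (y : ℕ → Y)
    (hxiter : ∀ k : ℕ,
      x (k+1) = x k - α • (f' (x k) + (ContinuousLinearMap.adjoint A) (y k)))
    (hyiter : ∀ k : ℕ, ∀ w : Y,
      hs (y (k+1)) - ⟪y (k+1), A ((2:ℝ) • x (k+1) - x k)⟫
        + (1/2) * ⟪α • A ((ContinuousLinearMap.adjoint A) (y (k+1) - y k)), y (k+1) - y k⟫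
      ≤ hs w - ⟪w, A ((2:ℝ) • x (k+1) - x k)⟫
        + (1/2) * ⟪α • A ((ContinuousLinearMap.adjoint A) (w - y k)), w - y k⟫)
    (δ a b c : ℝ) (hδ : 0 < δ)
    (hadef : a = δ / α)
    (hbdef : b = 1/(2*α) - Lf/4 - δ/α - α*δ*Lf^2/2 - δ*Lf + α*Lf^2/(4*δ))
    (hcdef : c = b - α*Lf^2/(2*δ))
    (hapos : 0 < a) (hbpos : 0 < b) (hcpos : 0 < c)
    (hbound : ∃ R : ℝ, ∀ k : ℕ, ‖x k‖ ≤ R ∧ ‖y k‖ ≤ R) :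
    Summable (fun k : ℕ => ‖x (k+1) - x k‖^2)
    ∧ Summable (fun k : ℕ => ‖y (k+1) - y k‖^2)
    ∧ Tendsto (fun k : ℕ => ‖x (k+1) - x k‖) atTop (nhds 0)
    ∧ Tendsto (fun k : ℕ => ‖y (k+1) - y k‖) atTop (nhds 0) := by
  obtain ⟨R, hR⟩ := hbound
  have hR0 : (0:ℝ) ≤ R := le_trans (norm_nonneg _) (hR 0).1
  set T := ContinuousLinearMap.adjoint A with hT
  set u : ℕ → ℝ := fun k => ‖x (k+1) - x k‖ with hu
  have hunn : ∀ k, 0 ≤ u k := fun k => norm_nonneg _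
  have hule : ∀ k, u k ≤ 2 * R := by
    intro k
    calc u k ≤ ‖x (k+1)‖ + ‖x k‖ := norm_sub_le _ _
      _ ≤ 2 * R := by linarith [(hR (k+1)).1, (hR k).1]
  -- basic identities from the x-iteration
  have F1 : ∀ k, α • f' (x k) + α • T (y k) = x k - x (k+1) := by
    intro k; rw [hxiter k, smul_add]; abel
  have F2 : ∀ k, α • T (y (k+1) - y k)
      = (x (k+1) - x k) - (x (k+2) - x (k+1)) + α • (f' (x k) - f' (x (k+1))) := by
    intro k
    have h1 := F1 k
    have h2 := F1 (k+1)
    have h3 : (k+1)+1 = k+2 := rfl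
    rw [h3] at h2
    have h4 : α • T (y (k+1) - y k)
        = (α • f' (x (k+1)) + α • T (y (k+1))) - (α • f' (x k) + α • T (y k))
          + α • (f' (x k) - f' (x (k+1))) := by
      rw [map_sub]; module
    rw [h4, h1, h2]; module
  have F3 : ∀ k, α * ‖T (y (k+1) - y k)‖ ≤ (1 + α*Lf) * u k + u (k+1) := by
    intro k
    have h1 : ‖α • T (y (k+1) - y k)‖ = α * ‖T (y (k+1) - y k)‖ := by
      rw [norm_smul, Real.norm_of_nonneg hα.le]
    rw [← h1, F2 k]
    have h2 : ‖(x (k+1) - x k) - (x (k+2) - x (k+1)) + α • (f' (x k) - f' (x (k+1)))‖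
        ≤ ‖x (k+1) - x k‖ + ‖x (k+2) - x (k+1)‖ + α * ‖f' (x k) - f' (x (k+1))‖ := by
      calc _ ≤ ‖(x (k+1) - x k) - (x (k+2) - x (k+1))‖ + ‖α • (f' (x k) - f' (x (k+1)))‖ :=
            norm_add_le _ _
        _ ≤ ‖x (k+1) - x k‖ + ‖x (k+2) - x (k+1)‖ + α * ‖f' (x k) - f' (x (k+1))‖ := by
            rw [norm_smul, Real.norm_of_nonneg hα.le]
            linarith [norm_sub_le (x (k+1) - x k) (x (k+2) - x (k+1))]
    have h3 : ‖f' (x k) - f' (x (k+1))‖ ≤ Lf * u k := by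
      have := hLip (x k) (x (k+1))
      calc ‖f' (x k) - f' (x (k+1))‖ ≤ Lf * ‖x k - x (k+1)‖ := this
        _ = Lf * u k := by rw [norm_sub_rev]
    have h4 : α * ‖f' (x k) - f' (x (k+1))‖ ≤ α * (Lf * u k) :=
      mul_le_mul_of_nonneg_left h3 hα.le
    have hu1 : ‖x (k+1) - x k‖ = u k := rfl
    have hu2 : ‖x (k+2) - x (k+1)‖ = u (k+1) := rfl
    rw [hu1, hu2] at h2
    nlinarith
  -- the subgradient inequality from the y-iteration
  have F4 : ∀ k (z : Y), ⟪z - y (k+1), A ((2:ℝ) • x (k+1) - x k)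
      - α • A (T (y (k+1) - y k))⟫ ≤ hs z - hs (y (k+1)) := by
    intro k z
    have hQ : ∀ s : Y, (1/2 : ℝ) * ⟪α • A (T s), s⟫ = α / 2 * ‖T s‖ ^ 2 := by
      intro s
      rw [real_inner_smul_left]
      rw [real_inner_comm]
      rw [← ContinuousLinearMap.adjoint_inner_left A (T s) s]
      rw [real_inner_self_eq_norm_sq]
      ring
    set p := y (k+1) with hp
    set v := (2:ℝ) • x (k+1) - x k with hv
    set d := z - p with hd
    set m := p - y k with hm
    set E := α / 2 * ‖T d‖ ^ 2 with hE
    set D := hs z - hs p - ⟪d, A v - α • A (T m)⟫ with hD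
    have e5 : ⟪d, A v - α • A (T m)⟫ = ⟪d, A v⟫ - α * ⟪T m, T d⟫ := by
      rw [inner_sub_right, real_inner_smul_right]
      congr 1
      rw [← ContinuousLinearMap.adjoint_inner_left A (T m) d, real_inner_comm]
    have key : ∀ t : ℝ, t ∈ Set.Ioc (0:ℝ) 1 → 0 ≤ D + t * E := by
      intro t ht
      have hw := hyiter k (p + t • d)
      simp only [hQ] at hw
      have e0 : p + t • d - y k = m + t • d := by rw [hm]; abel
      rw [e0] at hw
      have e1 : hs (p + t • d) ≤ (1 - t) * hs p + t * hs z := by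
        have h := hconv.2 (Set.mem_univ p) (Set.mem_univ z)
          (by linarith [ht.2] : (0:ℝ) ≤ 1 - t) ht.1.le (by ring)
        have h2 : (1 - t) • p + t • z = p + t • d := by rw [hd]; module
        rwa [h2] at h
      have e2 : ⟪p + t • d, A v⟫ = ⟪p, A v⟫ + t * ⟪d, A v⟫ := by
        rw [inner_add_left, real_inner_smul_left]
      have e4 : α / 2 * ‖T (m + t • d)‖ ^ 2
          = α / 2 * ‖T m‖ ^ 2 + t * (α * ⟪T m, T d⟫) + t ^ 2 * E := by
        rw [map_add, map_smul, hE]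
        rw [norm_add_sq_real, real_inner_smul_right, norm_smul]
        rw [Real.norm_eq_abs, mul_pow, sq_abs]
        ring
      rw [e4, e2] at hw
      have h6 : 0 ≤ t * ((hs z - hs p - ⟪d, A v⟫ + α * ⟪T m, T d⟫) + t * E) := by
        nlinarith [hw]
      have h7 := le_of_mul_le_mul_left
        (by linarith : t * 0 ≤ t * ((hs z - hs p - ⟪d, A v⟫ + α * ⟪T m, T d⟫) + t * E)) ht.1
      rw [hD, e5]; linarith
    have hDnn : 0 ≤ D := by
      have h8 : Tendsto (fun n : ℕ => D + (1 / ((n:ℝ) + 1)) * E) atTop (nhds (D + 0 * E)) :=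
        tendsto_const_nhds.add ((tendsto_one_div_add_atTop_nhds_zero_nat).mul_const E)
      rw [zero_mul, add_zero] at h8
      refine ge_of_tendsto h8 ?_
      filter_upwards with n
      refine key _ ⟨by positivity, ?_⟩
      rw [div_le_one (by positivity)]
      linarith [Nat.cast_nonneg (α := ℝ) n]
    linarith [hDnn]
  -- the Lagrangian
  set Lag : ℕ → ℝ := fun n => f (x n) + ⟪y n, A (x n)⟫ - hs (y n) with hLag
  -- the key one-step estimate
  have KEY : ∀ k, Lag (k+2) ≤ Lag (k+1) - (1/α - Lf/2) * u (k+1)^2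
      + ((1 + α*Lf) * u (k+1) + u (k+2)) * (Lf * u k) := by
    intro k
    have hidx : (k+1)+1 = k+2 := rfl
    have hdes := descent_lemma' f f' hf Lf hLip (x (k+1)) (x (k+2))
    have h1 := F1 (k+1); rw [hidx] at h1
    have e6 : α * (⟪f' (x (k+1)), x (k+2) - x (k+1)⟫ + ⟪T (y (k+1)), x (k+2) - x (k+1)⟫)
        = -(u (k+1))^2 := by
      rw [mul_add, ← real_inner_smul_left, ← real_inner_smul_left, ← inner_add_left, h1]
      rw [show x (k+1) - x (k+2) = -(x (k+2) - x (k+1)) by abel, inner_neg_left,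
        real_inner_self_eq_norm_sq]
    have hdiv : ⟪f' (x (k+1)), x (k+2) - x (k+1)⟫ + ⟪T (y (k+1)), x (k+2) - x (k+1)⟫
        = -(u (k+1))^2 / α := by
      rw [eq_div_iff hα.ne']
      linarith [e6]
    have e8 : ⟪T (y (k+1)), x (k+2) - x (k+1)⟫
        = ⟪y (k+1), A (x (k+2))⟫ - ⟪y (k+1), A (x (k+1))⟫ := by
      rw [ContinuousLinearMap.adjoint_inner_left A (x (k+2) - x (k+1)) (y (k+1))]
      rw [map_sub, inner_sub_right]
    have hD1 : f (x (k+2)) + ⟪y (k+1), A (x (k+2))⟫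
        ≤ f (x (k+1)) + ⟪y (k+1), A (x (k+1))⟫ - (1/α - Lf/2) * u (k+1)^2 := by
      have hnorm : ‖x (k+2) - x (k+1)‖ = u (k+1) := rfl
      rw [hnorm] at hdes
      have h9 : (1/α - Lf/2) * u (k+1)^2 = u (k+1)^2/α - Lf/2 * u (k+1)^2 := by ring
      have h9' : -(u (k+1))^2 / α = -(u (k+1)^2/α) := by ring
      rw [h9' ] at hdiv
      linarith [hdes, hdiv, e8]
    -- ascent part
    have hsub := F4 k (y (k+2))
    have e7 : A (x (k+2)) - (A ((2:ℝ) • x (k+1) - x k) - α • A (T (y (k+1) - y k)))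
        = A (α • (f' (x k) - f' (x (k+1)))) := by
      have hlin : ∀ (aa bb cc : X), A aa - (A bb - α • A cc) = A (aa - bb + α • cc) := by
        intro aa bb cc; rw [map_add, map_sub, map_smul]; abel
      rw [hlin]
      congr 1
      rw [F2 k]; module
    have h10 : ⟪y (k+2) - y (k+1), A (x (k+2))⟫
        - ⟪y (k+2) - y (k+1), A ((2:ℝ) • x (k+1) - x k) - α • A (T (y (k+1) - y k))⟫
        = ⟪y (k+2) - y (k+1), A (α • (f' (x k) - f' (x (k+1))))⟫ := by
      rw [← inner_sub_right, e7]
    have h11 : ⟪y (k+2) - y (k+1), A (α • (f' (x k) - f' (x (k+1))))⟫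
        = α * ⟪T (y (k+2) - y (k+1)), f' (x k) - f' (x (k+1))⟫ := by
      rw [map_smul, inner_smul_right_eq_smul, smul_eq_mul]
      congr 1
      rw [ContinuousLinearMap.adjoint_inner_left]
    have h12 : ⟪T (y (k+2) - y (k+1)), f' (x k) - f' (x (k+1))⟫
        ≤ ‖T (y (k+2) - y (k+1))‖ * (Lf * u k) := by
      have hcs := real_inner_le_norm (T (y (k+2) - y (k+1))) (f' (x k) - f' (x (k+1)))
      have h3 : ‖f' (x k) - f' (x (k+1))‖ ≤ Lf * u k := by
        calc ‖f' (x k) - f' (x (k+1))‖ ≤ Lf * ‖x k - x (k+1)‖ := hLip _ _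
          _ = Lf * u k := by rw [norm_sub_rev]
      nlinarith [norm_nonneg (T (y (k+2) - y (k+1)))]
    have hF3' := F3 (k+1)
    rw [hidx] at hF3'
    have e9 : ⟪y (k+2) - y (k+1), A (x (k+2))⟫ - (hs (y (k+2)) - hs (y (k+1)))
        ≤ ((1 + α*Lf) * u (k+1) + u (k+2)) * (Lf * u k) := by
      have hb1 : α * ⟪T (y (k+2) - y (k+1)), f' (x k) - f' (x (k+1))⟫
          ≤ α * (‖T (y (k+2) - y (k+1))‖ * (Lf * u k)) :=
        mul_le_mul_of_nonneg_left h12 hα.le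
      have hb2 : (α * ‖T (y (k+2) - y (k+1))‖) * (Lf * u k)
          ≤ ((1 + α*Lf) * u (k+1) + u (k+2)) * (Lf * u k) :=
        mul_le_mul_of_nonneg_right hF3' (mul_nonneg hLf.le (hunn k))
      nlinarith [hsub, h10, h11]
    have hLag1 : Lag (k+2) = f (x (k+2)) + ⟪y (k+2), A (x (k+2))⟫ - hs (y (k+2)) := rfl
    have hLag2 : Lag (k+1) = f (x (k+1)) + ⟪y (k+1), A (x (k+1))⟫ - hs (y (k+1)) := rfl
    have h13 : ⟪y (k+2), A (x (k+2))⟫ - ⟪y (k+1), A (x (k+2))⟫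
        = ⟪y (k+2) - y (k+1), A (x (k+2))⟫ := by rw [inner_sub_left]
    rw [hLag1, hLag2]
    linarith [hD1, e9, h13]
  -- constants
  set β : ℝ := Lf*(1+α*Lf)/2 + Lf/2 with hβ
  set ε : ℝ := 1/α - 5*Lf/2 - α*Lf^2 with hε'
  have hε : 0 < ε := by
    have h1 : c = 1/(2*α) - Lf/4 - δ/α - α*δ*Lf^2/2 - δ*Lf - α*Lf^2/(4*δ) := by
      rw [hcdef, hbdef]; field_simp; ring
    rw [h1] at hcpos
    have hA' : (0:ℝ) < 4 + 2*α^2*Lf^2 + 4*α*Lf := by positivity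
    have h2 : Lf + α*Lf^2/2 ≤ δ/α + α*δ*Lf^2/2 + δ*Lf + α*Lf^2/(4*δ) := by
      rw [← sub_nonneg]
      have h4 : δ/α + α*δ*Lf^2/2 + δ*Lf + α*Lf^2/(4*δ) - (Lf + α*Lf^2/2)
          = (4*δ^2 + 2*α^2*δ^2*Lf^2 + 4*α*δ^2*Lf + α^2*Lf^2 - 4*α*δ*Lf - 2*α^2*δ*Lf^2)
            / (4*α*δ) := by
        field_simp; ring
      rw [h4]
      apply div_nonneg _ (by positivity)
      nlinarith [sq_nonneg ((4 + 2*α^2*Lf^2 + 4*α*Lf)*δ - (2*α*Lf + α^2*Lf^2)),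
        sq_nonneg (α^2*Lf^2), hA', hα, hδ, hLf]
    rw [hε']
    have h5 : 1/(2*α) = (1/α)/2 := by ring
    linarith [hcpos, h2, h5]
  set EE : ℕ → ℝ := fun m => Lag (m+1) + β * (u m)^2 - Lf/2 * (u (m+1))^2 with hEE
  have hstep : ∀ k, EE (k+1) + ε * u (k+1)^2 ≤ EE k := by
    intro k
    have hkey := KEY k
    have h1 : EE (k+1) = Lag (k+2) + β * (u (k+1))^2 - Lf/2 * (u (k+2))^2 := rfl
    have h2 : EE k = Lag (k+1) + β * (u k)^2 - Lf/2 * (u (k+1))^2 := rfl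
    rw [h1, h2, hβ, hε']
    nlinarith [mul_nonneg hLf.le (sq_nonneg (u k - u (k+1))),
      mul_nonneg (mul_nonneg hα.le (mul_nonneg hLf.le hLf.le)) (sq_nonneg (u k - u (k+1))),
      mul_nonneg hLf.le (sq_nonneg (u k - u (k+2)))]
  -- lower bound for EE
  obtain ⟨CC, hCC⟩ : ∃ CC : ℝ, ∀ m, -CC ≤ EE m := by
    have hfc : Continuous f := by
      have hdiff : Differentiable ℝ f := fun p => (hf p).differentiableAt
      exact hdiff.continuous
    have hsc : Continuous hs := continuous_iff_continuousAt.mpr fun z =>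
      (hconv.continuousOn isOpen_univ).continuousAt Filter.univ_mem
    have hballX : ∀ n, x n ∈ Metric.closedBall (0:X) R := fun n => by
      rw [Metric.mem_closedBall, dist_zero_right]; exact (hR n).1
    have hballY : ∀ n, y n ∈ Metric.closedBall (0:Y) R := fun n => by
      rw [Metric.mem_closedBall, dist_zero_right]; exact (hR n).2
    obtain ⟨zf, hzfmem, hzf⟩ := (isCompact_closedBall (0:X) R).exists_isMinOn
      ⟨0, Metric.mem_closedBall_self hR0⟩ hfc.continuousOn
    obtain ⟨zh, hzhmem, hzh⟩ := (isCompact_closedBall (0:Y) R).exists_isMaxOn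
      ⟨0, Metric.mem_closedBall_self hR0⟩ hsc.continuousOn
    have hinner : ∀ n, -(R*(‖A‖*R)) ≤ ⟪y n, A (x n)⟫ := by
      intro n
      have h1 := abs_real_inner_le_norm (y n) (A (x n))
      have h2 := A.le_opNorm (x n)
      have h3 := (hR n).1; have h4 := (hR n).2
      have h5 := norm_nonneg (y n); have h6 := norm_nonneg (A (x n))
      have h7 := norm_nonneg A
      have h8 : ‖A (x n)‖ ≤ ‖A‖ * R := le_trans h2 (mul_le_mul_of_nonneg_left h3 h7)
      have h9 : ‖y n‖ * ‖A (x n)‖ ≤ R * (‖A‖ * R) := mul_le_mul h4 h8 h6 hR0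
      linarith [neg_abs_le ⟪y n, A (x n)⟫, h1, h9]
    refine ⟨-(f zf) + R*(‖A‖*R) + hs zh + Lf/2*(2*R)^2, ?_⟩
    intro m
    have e1 : EE m = f (x (m+1)) + ⟪y (m+1), A (x (m+1))⟫ - hs (y (m+1))
        + β*(u m)^2 - Lf/2*(u (m+1))^2 := rfl
    rw [e1]
    clear_value u β EE Lag
    have b1 : f zf ≤ f (x (m+1)) := isMinOn_iff.mp hzf _ (hballX (m+1))
    have b2 := hinner (m+1)
    have b3 : hs (y (m+1)) ≤ hs zh := isMaxOn_iff.mp hzh _ (hballY (m+1))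
    have hβpos : (0:ℝ) ≤ β := by rw [hβ]; positivity
    have b4 : 0 ≤ β*(u m)^2 := mul_nonneg hβpos (sq_nonneg _)
    have b5 : (u (m+1))^2 ≤ (2*R)^2 := by nlinarith [hule (m+1), hunn (m+1)]
    have b6 : Lf/2*(u (m+1))^2 ≤ Lf/2*(2*R)^2 := by nlinarith [hLf.le]
    have p1 : f zf ≤ f (x (m+1)) := by linarith [b1]
    have p2 : -(R * (‖A‖ * R)) ≤ ⟪y (m+1), A (x (m+1))⟫ := by linarith [b2]
    have p3 : hs (y (m+1)) ≤ hs zh := by linarith [b3]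
    have p4 : (0:ℝ) ≤ β*(u m)^2 := by linarith [b4]
    have p6 : Lf/2*(u (m+1))^2 ≤ Lf/2*(2*R)^2 := by linarith [b6]
    have pfin : -(-(f zf) + R*(‖A‖*R) + hs zh + Lf/2*(2*R)^2)
        ≤ f (x (m+1)) + ⟪y (m+1), A (x (m+1))⟫ - hs (y (m+1)) + β*(u m)^2 - Lf/2*(u (m+1))^2 := by
      nlinarith [p1, p2, p3, p4, p6]
    exact pfin
  -- telescoping
  have htel : ∀ N, EE N + ε * ∑ m ∈ Finset.range N, u (m+1)^2 ≤ EE 0 := by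
    intro N
    induction N with
    | zero => simp
    | succ n ih =>
      have h1 := hstep n
      rw [Finset.sum_range_succ, mul_add]
      linarith
  have hsum1 : Summable (fun m => u (m+1)^2) := by
    apply summable_of_sum_range_le (fun n => sq_nonneg _) (c := (EE 0 + CC)/ε)
    intro N
    rw [le_div_iff₀ hε]
    have h1 := htel N
    have h2 := hCC N
    have h3 : ε * ∑ m ∈ Finset.range N, u (m+1)^2
        = (∑ m ∈ Finset.range N, u (m+1)^2) * ε := mul_comm _ _
    linarith
  have hsx : Summable (fun m => u m ^ 2) := (summable_nat_add_iff 1).mp hsum1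
  -- antilipschitz bound for T
  have hinj : Function.Injective T := by
    intro y1 y2 h
    have h0 : T (y1 - y2) = 0 := by rw [map_sub, h, sub_self]
    have h1 : ⟪y1 - y2, y1 - y2⟫ = 0 := by
      obtain ⟨x0, hx0⟩ := hA (y1 - y2)
      calc ⟪y1 - y2, y1 - y2⟫ = ⟪y1 - y2, A x0⟫ := by rw [hx0]
        _ = ⟪T (y1 - y2), x0⟫ := (ContinuousLinearMap.adjoint_inner_left A x0 (y1 - y2)).symm
        _ = 0 := by rw [h0, inner_zero_left]
    exact sub_eq_zero.mp (inner_self_eq_zero.mp h1)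
  obtain ⟨K, hKpos, hKanti⟩ :=
    LinearMap.exists_antilipschitzWith (T : Y →ₗ[ℝ] X) (LinearMap.ker_eq_bot.mpr hinj)
  have hK : ∀ w : Y, ‖w‖ ≤ K * ‖T w‖ := by
    intro w
    have h1 := hKanti.le_mul_dist w 0
    simpa [dist_eq_norm] using h1
  have hKnn : (0:ℝ) ≤ K := hKpos.le
  -- summability of y-differences
  have hsy : Summable (fun k : ℕ => ‖y (k+1) - y k‖^2) := by
    have hb : Summable (fun k : ℕ =>
        (2*(K:ℝ)^2*(1+α*Lf)^2/α^2) * u k^2 + (2*(K:ℝ)^2/α^2) * u (k+1)^2) :=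
      (hsx.mul_left _).add (hsum1.mul_left _)
    refine Summable.of_nonneg_of_le (fun k => sq_nonneg _) ?_ hb
    intro k
    have h1 := hK (y (k+1) - y k)
    have h2 := F3 k
    have hTnn := norm_nonneg (T (y (k+1) - y k))
    have hynn := norm_nonneg (y (k+1) - y k)
    have h3 : α * ‖y (k+1) - y k‖ ≤ K * ((1 + α*Lf) * u k + u (k+1)) := by
      nlinarith [mul_le_mul_of_nonneg_left h1 hα.le, mul_le_mul_of_nonneg_left h2 hKnn]
    have h4 := mul_self_le_mul_self (by positivity : (0:ℝ) ≤ α * ‖y (k+1) - y k‖) h3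
    rw [show (2*(K:ℝ)^2*(1+α*Lf)^2/α^2) * u k^2 + (2*(K:ℝ)^2/α^2) * u (k+1)^2
        = (2*(K:ℝ)^2*(1+α*Lf)^2 * u k^2 + 2*(K:ℝ)^2 * u (k+1)^2)/α^2 by ring]
    rw [le_div_iff₀ (by positivity)]
    nlinarith [sq_nonneg ((1+α*Lf) * u k - u (k+1)),
      sq_nonneg ((K:ℝ)*((1+α*Lf) * u k - u (k+1))), hunn k, hunn (k+1)]
  -- conclusions
  have goal1 : Summable (fun k : ℕ => ‖x (k+1) - x k‖^2) := hsx
  have ht1 : Tendsto (fun k => u k) atTop (nhds 0) := by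
    have h := (Real.continuous_sqrt.tendsto 0).comp hsx.tendsto_atTop_zero
    have h2 : (fun k => Real.sqrt (u k ^ 2)) = fun k => u k :=
      funext fun k => Real.sqrt_sq (hunn k)
    rw [Function.comp_def] at h
    rwa [h2, Real.sqrt_zero] at h
  have ht2 : Tendsto (fun k : ℕ => ‖y (k+1) - y k‖) atTop (nhds 0) := by
    have h := (Real.continuous_sqrt.tendsto 0).comp hsy.tendsto_atTop_zero
    have h2 : (fun k : ℕ => Real.sqrt (‖y (k+1) - y k‖ ^ 2)) = fun k => ‖y (k+1) - y k‖ :=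
      funext fun k => Real.sqrt_sq (norm_nonneg _)
    rw [Function.comp_def] at h
    rwa [h2, Real.sqrt_zero] at h
  exact ⟨goal1, hsy, ht1, ht2⟩
end
end
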